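/- Example 2 (a non-identifying mobility pattern). Let y₁₁, y₁₂, y₂₁, y₂₂, μα₁, μα₂, μγ₁, ρ ∈ ℝ satisfy y₁₁ = μα₁ + ρ·μα₁ + μγ₁, y₂₁ = μα₂ + ρ·μα₂, y₁₂ = μα₁ + ρ·μα₁, and y₂₂ = μα₂ + ρ·μα₂ + μγ₁. Then for every ρ̄ ∈ ℝ with ρ̄ ≠ −1 there exist μ̄α₁, μ̄α₂ ∈ ℝ (namely μ̄αᵢ = (1+ρ)·μαᵢ/(1+ρ̄)) such that y₁₁ = μ̄α₁ + ρ̄·μ̄α₁ + μγ₁, y₂₁ = μ̄α₂ + ρ̄·μ̄α₂, y₁₂ = μ̄α₁ + ρ̄·μ̄α₁, and y₂₂ = μ̄α₂ + ρ̄·μ̄α₂ + μγ₁. Hence ρ is not identified from this mobility pattern. -/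

import Mathlib

/-- Example 2 (a non-identifying mobility pattern): in the group-swapping pattern, for any
ρ̄ ≠ −1 the alternative parameters μ̄αᵢ = (1+ρ)μαᵢ/(1+ρ̄) reproduce the same expected
outcomes, so ρ is not identified. -/
theorem example2_non_identifying_mobility
    (y₁₁ y₁₂ y₂₁ y₂₂ μα₁ μα₂ μγ₁ ρ : ℝ)
    (h11 : y₁₁ = μα₁ + ρ * μα₁ + μγ₁)
    (h21 : y₂₁ = μα₂ + ρ * μα₂)
    (h12 : y₁₂ = μα₁ + ρ * μα₁)
    (h22 : y₂₂ = μα₂ + ρ * μα₂ + μγ₁) :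
    ∀ ρ' : ℝ, ρ' ≠ -1 → ∃ μα₁' μα₂' : ℝ,
      μα₁' = (1 + ρ) * μα₁ / (1 + ρ') ∧ μα₂' = (1 + ρ) * μα₂ / (1 + ρ') ∧
      y₁₁ = μα₁' + ρ' * μα₁' + μγ₁ ∧
      y₂₁ = μα₂' + ρ' * μα₂' ∧
      y₁₂ = μα₁' + ρ' * μα₁' ∧
      y₂₂ = μα₂' + ρ' * μα₂' + μγ₁ := by
  intro ρ' hρ'
  have hne : (1 : ℝ) + ρ' ≠ 0 := by
    intro h; apply hρ'; linarith
  refine ⟨(1 + ρ) * μα₁ / (1 + ρ'), (1 + ρ) * μα₂ / (1 + ρ'), rfl, rfl, ?_, ?_, ?_, ?_⟩ <;>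
    (subst h11 h21 h12 h22; field_simp)
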